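/- Suppose ξ : [0,∞) → ℝ^m satisfies ξ(t) = ξ(0) + ∫_0^t g(s) ds for a measurable function g such that either g ∈ L^p([0,∞); ℝ^m) for some p ∈ (1,∞) or g is essentially bounded on [0,∞). If additionally ∫_0^∞ |ξ(t)|² dt < ∞, then ξ(t) → 0 as t → ∞. -/

import Mathlib

open MeasureTheory

/-- Barbalat-type lemma: if `ξ(t) = ξ(0) + ∫_0^t g` where `g` is measurable and
either `∫_0^∞ ‖g‖^p < ∞` for some `p ∈ (1,∞)` or `g` is essentially bounded on
`[0,∞)`, and moreover `∫_0^∞ ‖ξ‖² < ∞`, then `ξ(t) → 0` as `t → ∞`. -/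
theorem barbalat_L2_implies_convergence
    (m : ℕ) (ξ g : ℝ → EuclideanSpace ℝ (Fin m))
    (hg_meas : Measurable g)
    (hg : (∃ p : ℝ, 1 < p ∧ IntegrableOn (fun s => ‖g s‖ ^ p) (Set.Ici (0 : ℝ))) ∨
          (∃ C : ℝ, ∀ᵐ s ∂(volume.restrict (Set.Ici (0 : ℝ))), ‖g s‖ ≤ C))
    (hξ : ∀ t, 0 ≤ t → ξ t = ξ 0 + ∫ s in (0 : ℝ)..t, g s)
    (hξ_L2 : IntegrableOn (fun t => ‖ξ t‖ ^ 2) (Set.Ici (0 : ℝ))) :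
    Filter.Tendsto ξ Filter.atTop (nhds 0) := by
  -- local integrability of g on subintervals of [0,∞)
  have hgloc : ∀ a b : ℝ, 0 ≤ a → a ≤ b → IntervalIntegrable g volume a b := by
    intro a b ha hab
    have hsub : Set.uIcc a b ⊆ Set.Ici (0:ℝ) := by
      rw [Set.uIcc_of_le hab]
      exact fun x hx => le_trans ha hx.1
    apply MeasureTheory.IntegrableOn.intervalIntegrable
    rcases hg with ⟨p, hp, hgp⟩ | ⟨C, hC⟩
    · have hb : IntegrableOn (fun x => 1 + ‖g x‖ ^ p) (Set.uIcc a b) := by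
        apply Integrable.add
        · exact (integrableOn_const measure_Icc_lt_top.ne :
            IntegrableOn (fun _ => (1:ℝ)) (Set.uIcc a b) volume)
        · exact hgp.mono_set hsub
      refine Integrable.mono' hb (hg_meas.aestronglyMeasurable.restrict) ?_
      refine Filter.Eventually.of_forall fun x => ?_
      rcases le_or_gt ‖g x‖ 1 with h | h
      · have : (0:ℝ) ≤ ‖g x‖ ^ p := Real.rpow_nonneg (norm_nonneg _) p
        linarith
      · calc ‖g x‖ = ‖g x‖ ^ (1:ℝ) := (Real.rpow_one _).symm
          _ ≤ ‖g x‖ ^ p := Real.rpow_le_rpow_of_exponent_le h.le hp.le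
          _ ≤ 1 + ‖g x‖ ^ p := by linarith
    · refine Integrable.mono'
        ((integrableOn_const measure_Icc_lt_top.ne) :
          IntegrableOn (fun _ => C) (Set.uIcc a b) volume)
        (hg_meas.aestronglyMeasurable.restrict) ?_
      exact ae_restrict_of_ae_restrict_of_subset hsub hC
  -- combined bound on ∫ ‖g‖ over short intervals
  have hcomb : ∀ ε : ℝ, 0 < ε → ∃ δ : ℝ, 0 < δ ∧
      ∀ s t : ℝ, 0 ≤ s → s ≤ t → t ≤ s + δ → (∫ x in s..t, ‖g x‖) ≤ ε := by
    intro ε hε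
    rcases hg with ⟨p, hp, hgp⟩ | ⟨C, hC⟩
    · set I : ℝ := ∫ x in Set.Ici (0:ℝ), ‖g x‖ ^ p with hI
      have hI0 : 0 ≤ I := setIntegral_nonneg measurableSet_Ici
        (fun x _ => Real.rpow_nonneg (norm_nonneg _) p)
      set M : ℝ := max 1 ((2*I/ε + 1) ^ (1/(p-1))) with hM
      have hM1 : (1:ℝ) ≤ M := le_max_left _ _
      have hM0 : (0:ℝ) < M := by linarith
      have hMp : (0:ℝ) < M ^ (p-1) := Real.rpow_pos_of_pos hM0 _
      -- M^(p-1) ≥ 2I/ε + 1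
      have hMbig : 2*I/ε + 1 ≤ M ^ (p-1) := by
        have h1 : (2*I/ε + 1) ^ (1/(p-1)) ≤ M := le_max_right _ _
        have hbase : (0:ℝ) ≤ 2*I/ε + 1 := by positivity
        have h2 : ((2*I/ε + 1) ^ (1/(p-1))) ^ (p-1) ≤ M ^ (p-1) :=
          Real.rpow_le_rpow (Real.rpow_nonneg hbase _) h1 (by linarith)
        rwa [← Real.rpow_mul hbase, one_div, inv_mul_cancel₀ (by linarith : p - 1 ≠ 0),
          Real.rpow_one] at h2
      have hIM : I / M ^ (p-1) ≤ ε/2 := by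
        rw [div_le_iff₀ hMp]
        have h3 : ε * (2*I/ε + 1) ≤ ε * M ^ (p-1) :=
          mul_le_mul_of_nonneg_left hMbig hε.le
        have h4 : ε * (2*I/ε + 1) = 2*I + ε := by field_simp
        nlinarith
      refine ⟨min 1 (ε/(2*M)), lt_min one_pos (by positivity), fun s t hs hst htd => ?_⟩
      have hsub : Set.uIcc s t ⊆ Set.Ici (0:ℝ) := by
        rw [Set.uIcc_of_le hst]; exact fun x hx => le_trans hs hx.1
      have hgpint : IntervalIntegrable (fun x => ‖g x‖ ^ p) volume s t :=
        (hgp.mono_set hsub).intervalIntegrable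
      have hptw : ∀ x, ‖g x‖ ≤ M + ‖g x‖ ^ p / M ^ (p-1) := by
        intro x
        rcases le_or_gt ‖g x‖ M with h | h
        · have : (0:ℝ) ≤ ‖g x‖ ^ p / M ^ (p-1) :=
            div_nonneg (Real.rpow_nonneg (norm_nonneg _) p) hMp.le
          linarith
        · have hx0 : (0:ℝ) < ‖g x‖ := lt_of_le_of_lt hM0.le h
          have h1 : ‖g x‖ * M ^ (p-1) ≤ ‖g x‖ * ‖g x‖ ^ (p-1) :=
            mul_le_mul_of_nonneg_left (Real.rpow_le_rpow hM0.le h.le (by linarith)) hx0.le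
          have h2 : ‖g x‖ * ‖g x‖ ^ (p-1) = ‖g x‖ ^ p := by
            rw [← Real.rpow_one_add' (by positivity) (by intro hc; nlinarith)]
            ring_nf
          have h3 : ‖g x‖ ≤ ‖g x‖ ^ p / M ^ (p-1) := by
            rw [le_div_iff₀ hMp]; rw [h2] at h1; exact h1
          linarith
      have step1 : (∫ x in s..t, ‖g x‖) ≤ ∫ x in s..t, (M + ‖g x‖ ^ p / M ^ (p-1)) := by
        apply intervalIntegral.integral_mono_on hst (hgloc s t hs hst).norm
          (intervalIntegrable_const.add (hgpint.div_const _)) (fun x _ => hptw x)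
      have step2 : (∫ x in s..t, (M + ‖g x‖ ^ p / M ^ (p-1)))
          = M * (t - s) + (∫ x in s..t, ‖g x‖ ^ p) / M ^ (p-1) := by
        rw [intervalIntegral.integral_add intervalIntegrable_const (hgpint.div_const _),
          intervalIntegral.integral_const, intervalIntegral.integral_div, smul_eq_mul]
        ring
      have step3 : (∫ x in s..t, ‖g x‖ ^ p) ≤ I := by
        rw [intervalIntegral.integral_of_le hst]
        apply setIntegral_mono_set hgp
          (Filter.Eventually.of_forall fun x => Real.rpow_nonneg (norm_nonneg _) p)
        exact HasSubset.Subset.eventuallyLE (fun x hx => le_trans hs hx.1.le)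
      have hts : t - s ≤ ε/(2*M) := le_trans (by linarith) (min_le_right 1 (ε/(2*M)))
      have : M * (t - s) ≤ ε/2 := by
        have := mul_le_mul_of_nonneg_left hts hM0.le
        rw [mul_div_assoc'] at this
        calc M * (t - s) ≤ M * (ε/(2*M)) := mul_le_mul_of_nonneg_left hts hM0.le
          _ = ε/2 := by field_simp
      have hdivle : (∫ x in s..t, ‖g x‖ ^ p) / M ^ (p-1) ≤ ε/2 :=
        le_trans (div_le_div_of_nonneg_right step3 hMp.le) hIM
      linarith
    · set C' : ℝ := max C 1 with hC'
      have hC'0 : (0:ℝ) < C' := lt_of_lt_of_le one_pos (le_max_right _ _)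
      refine ⟨ε/C', by positivity, fun s t hs hst htd => ?_⟩
      have hsub : Set.Icc s t ⊆ Set.Ici (0:ℝ) := fun x hx => le_trans hs hx.1
      have hae : ∀ᵐ x ∂(volume.restrict (Set.Icc s t)), ‖g x‖ ≤ C' := by
        filter_upwards [ae_restrict_of_ae_restrict_of_subset hsub hC] with x hx
        exact le_trans hx (le_max_left _ _)
      have h1 : (∫ x in s..t, ‖g x‖) ≤ ∫ _ in s..t, C' :=
        intervalIntegral.integral_mono_ae_restrict hst (hgloc s t hs hst).norm
          intervalIntegrable_const hae
      rw [intervalIntegral.integral_const, smul_eq_mul] at h1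
      have : (t - s) * C' ≤ (ε/C') * C' :=
        mul_le_mul_of_nonneg_right (by linarith) hC'0.le
      rw [div_mul_cancel₀ _ hC'0.ne'] at this
      linarith
  -- difference formula
  have hdiff : ∀ s t : ℝ, 0 ≤ s → s ≤ t → ξ t - ξ s = ∫ x in s..t, g x := by
    intro s t hs hst
    rw [hξ t (hs.trans hst), hξ s hs,
      ← intervalIntegral.integral_interval_sub_left (hgloc 0 t le_rfl (hs.trans hst))
        (hgloc 0 s le_rfl hs)]
    abel
  -- uniform continuity type bound
  have hUC : ∀ ε : ℝ, 0 < ε → ∃ δ : ℝ, 0 < δ ∧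
      ∀ s t : ℝ, 0 ≤ s → s ≤ t → t ≤ s + δ → ‖ξ t - ξ s‖ ≤ ε := by
    intro ε hε
    obtain ⟨δ, hδ, H⟩ := hcomb ε hε
    refine ⟨δ, hδ, fun s t hs hst htd => ?_⟩
    rw [hdiff s t hs hst]
    exact le_trans (intervalIntegral.norm_integral_le_integral_norm hst) (H s t hs hst htd)
  -- main argument
  set f : ℝ → ℝ := fun t => ‖ξ t‖ ^ 2 with hf
  have hfInt : IntegrableOn f (Set.Ioi (0:ℝ)) := hξ_L2.mono_set Set.Ioi_subset_Ici_self
  have hfloc : ∀ a b : ℝ, 0 ≤ a → IntervalIntegrable f volume a b → True := fun _ _ _ _ => trivial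
  by_contra hcon
  rw [NormedAddCommGroup.tendsto_nhds_zero] at hcon
  push_neg at hcon
  obtain ⟨ε, hε, hfreq⟩ := hcon
  rw [Filter.frequently_atTop] at hfreq
  obtain ⟨δ, hδ, hU⟩ := hUC (ε/2) (by positivity)
  -- interval integrability of f on subintervals of [0,∞)
  have hfi : ∀ a b : ℝ, 0 ≤ a → a ≤ b → IntervalIntegrable f volume a b := by
    intro a b ha hab
    apply (hξ_L2.mono_set ?_).intervalIntegrable
    rw [Set.uIcc_of_le hab]
    exact fun x hx => le_trans ha hx.1
  -- tail integral tends to 0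
  have h1 : Filter.Tendsto (fun b => ∫ x in (0:ℝ)..b, f x) Filter.atTop
      (nhds (∫ x in Set.Ioi (0:ℝ), f x)) :=
    intervalIntegral_tendsto_integral_Ioi 0 hfInt Filter.tendsto_id
  have h2 : Filter.Tendsto (fun t : ℝ => ∫ x in (0:ℝ)..(t+δ), f x) Filter.atTop
      (nhds (∫ x in Set.Ioi (0:ℝ), f x)) :=
    intervalIntegral_tendsto_integral_Ioi 0 hfInt
      (Filter.tendsto_atTop_add_const_right _ δ Filter.tendsto_id)
  have h3 : Filter.Tendsto (fun t : ℝ => ∫ x in t..(t+δ), f x) Filter.atTop (nhds 0) := by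
    have hsub := h2.sub h1
    rw [sub_self] at hsub
    refine hsub.congr' ?_
    filter_upwards [Filter.eventually_ge_atTop (0:ℝ)] with t ht
    exact intervalIntegral.integral_interval_sub_left (hfi 0 (t+δ) le_rfl (by linarith))
      (hfi 0 t le_rfl ht)
  have hsmall : ∀ᶠ t in Filter.atTop, (∫ x in t..(t+δ), f x) < δ * (ε/2)^2 :=
    h3.eventually_lt_const (by positivity)
  obtain ⟨T, hT⟩ := (hsmall.and (Filter.eventually_ge_atTop (0:ℝ))).exists_forall_of_atTop
  obtain ⟨t, htT, htξ⟩ := hfreq T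
  obtain ⟨hts, ht0⟩ := hT t htT
  -- lower bound on the integral over [t, t+δ]
  have hlow : δ * (ε/2)^2 ≤ ∫ x in t..(t+δ), f x := by
    have hmono : ∀ x ∈ Set.Icc t (t+δ), (ε/2)^2 ≤ f x := by
      intro x hx
      have h1 : ‖ξ x - ξ t‖ ≤ ε/2 := hU t x ht0 hx.1 hx.2
      have h2 : ε/2 ≤ ‖ξ x‖ := by
        have h2 := norm_sub_norm_le (ξ t) (ξ x)
        rw [norm_sub_rev] at h2
        linarith
      have : (ε/2)^2 ≤ ‖ξ x‖^2 := by nlinarith [norm_nonneg (ξ x)]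
      simpa [hf] using this
    calc δ * (ε/2)^2 = ∫ _ in t..(t+δ), (ε/2)^2 := by
          rw [intervalIntegral.integral_const]; ring_nf
      _ ≤ ∫ x in t..(t+δ), f x := by
          apply intervalIntegral.integral_mono_on (by linarith)
            intervalIntegrable_const (hfi t (t+δ) ht0 (by linarith)) hmono
  linarith
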